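/- Let g ∈ (0,4) be a constant. For every regular perfect fluid solution with non-decreasing equation of state f whose pressure–density ratio satisfies p(r)/f(p(r)) < 2/√g − 1 for all r ∈ [0,R), the inequality Φ(m(r)/r, 4π r² p(r)) ≥ g holds for all r ∈ (0,R), where Φ(M,P) = 9M[2(2M+P) − (3M+P)²] / ((1−2M)(3M+P)²). -/

import Mathlib

open Set Filter Real

private noncomputable def bH (g : ℝ) (m p : ℝ → ℝ) (x : ℝ) : ℝ :=
  (g + (9 - 2 * g) * (m x / x)) *
      ((3 * (m x / x) + 4 * Real.pi * x ^ 2 * p x) * (3 * (m x / x) + 4 * Real.pi * x ^ 2 * p x))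
    - 18 * ((m x / x) * (3 * (m x / x) + 4 * Real.pi * x ^ 2 * p x))
    + 18 * ((m x / x) * (m x / x))

private noncomputable def bDD (g : ℝ) (m p : ℝ → ℝ) (x : ℝ) : ℝ :=
  (1 - 2 * (m x / x)) * ((9 - 2 * g) * (3 * (m x / x) + 4 * Real.pi * x ^ 2 * p x) ^ 2
        + 6 * (g + (9 - 2 * g) * (m x / x)) * (3 * (m x / x) + 4 * Real.pi * x ^ 2 * p x)
        - 18 * (3 * (m x / x) + 4 * Real.pi * x ^ 2 * p x) - 18 * (m x / x))
    - ((m x / x) + 4 * Real.pi * x ^ 2 * p x) *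
        (2 * (g + (9 - 2 * g) * (m x / x)) * (3 * (m x / x) + 4 * Real.pi * x ^ 2 * p x)
          - 18 * (m x / x))

private noncomputable def bdH (g : ℝ) (f m p : ℝ → ℝ) (x : ℝ) : ℝ :=
  ((4 - 14 * (m x / x) - 2 * (4 * Real.pi * x ^ 2 * p x)) * bH g m p x
      + (4 * Real.pi * x ^ 2 * f (p x) - 3 * (m x / x)) * bDD g m p x) / (x * (1 - 2 * (m x / x)))

private noncomputable def bcc (m p : ℝ → ℝ) (x : ℝ) : ℝ :=
  (4 - 14 * (m x / x) - 2 * (4 * Real.pi * x ^ 2 * p x)) / (x * (1 - 2 * (m x / x)))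

set_option maxHeartbeats 1600000 in
private lemma buchdahl_hasDerivAt (g : ℝ) (f m p : ℝ → ℝ) (x : ℝ)
    (hx0 : 0 < x) (hm0 : 0 < m x) (h2m : 2 * m x < x) (hp0 : 0 < p x) (hf0 : 0 < f (p x))
    (hdm : HasDerivAt m (4 * Real.pi * x ^ 2 * f (p x)) x)
    (hdp : HasDerivAt p (-(f (p x) * m x / x ^ 2) * (1 + p x / f (p x)) *
        (1 + 4 * Real.pi * x ^ 3 * p x / m x) * (1 - 2 * m x / x)⁻¹) x) :
    HasDerivAt (bH g m p) (bdH g f m p x) x := by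
  have hx0' : x ≠ 0 := ne_of_gt hx0
  have hf0' : f (p x) ≠ 0 := ne_of_gt hf0
  have hm0' : m x ≠ 0 := ne_of_gt hm0
  have hC : (0:ℝ) < x - 2 * m x := by linarith
  have hC' : x - 2 * m x ≠ 0 := ne_of_gt hC
  have hA : (0:ℝ) < 1 - 2 * m x / x := by
    rw [sub_pos, div_lt_one hx0]; exact h2m
  have hA' : (1:ℝ) - 2 * m x / x ≠ 0 := ne_of_gt hA
  have hB : (0:ℝ) < 1 - 2 * (m x / x) := by
    have h : 2 * (m x / x) = 2 * m x / x := by ring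
    rw [h]; exact hA
  have hB' : (1:ℝ) - 2 * (m x / x) ≠ 0 := ne_of_gt hB
  have hdval : -(f (p x) * m x / x ^ 2) * (1 + p x / f (p x)) *
        (1 + 4 * Real.pi * x ^ 3 * p x / m x) * (1 - 2 * m x / x)⁻¹
      = -((f (p x) + p x) * (m x + 4 * Real.pi * x ^ 3 * p x)) / (x * (x - 2 * m x)) := by
    field_simp
  rw [hdval] at hdp
  have hM := hdm.div (hasDerivAt_id x) hx0'
  simp only [id_eq, mul_one] at hM
  have hP := ((hasDerivAt_pow 2 x).const_mul (4 * Real.pi)).mul hdp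
  have hs := (hM.const_mul (3:ℝ)).add hP
  have hAc := (hM.const_mul (9 - 2*g)).const_add g
  have htotal := ((hAc.mul (hs.mul hs)).sub ((hM.mul hs).const_mul 18)).add
      ((hM.mul hM).const_mul 18)
  have hbH : (fun y => (g + (9 - 2 * g) * (m y / y)) *
      ((3 * (m y / y) + 4 * Real.pi * y ^ 2 * p y) * (3 * (m y / y) + 4 * Real.pi * y ^ 2 * p y))
    - 18 * ((m y / y) * (3 * (m y / y) + 4 * Real.pi * y ^ 2 * p y))
    + 18 * ((m y / y) * (m y / y))) = bH g m p := rfl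
  replace htotal : HasDerivAt (bH g m p) _ x := htotal
  convert htotal using 1
  simp only [bdH, bH, bDD]
  push_cast
  norm_num
  rw [div_eq_iff (by exact mul_ne_zero hx0' hB')]
  have hC2 : x - m x * 2 ≠ 0 := by intro h; apply hC'; linarith
  field_simp
  ring

private lemma bH_contOn (g : ℝ) (m p : ℝ → ℝ) {a b R : ℝ} (ha : 0 < a) (hb : b < R)
    (hm_cont : ContinuousOn m (Icc 0 R)) (hp_cont : ContinuousOn p (Icc 0 R)) :
    ContinuousOn (bH g m p) (Icc a b) := by
  have hsub : Icc a b ⊆ Icc 0 R := fun x hx => ⟨le_trans ha.le hx.1, le_trans hx.2 hb.le⟩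
  have hm' := hm_cont.mono hsub
  have hp' := hp_cont.mono hsub
  have hMc : ContinuousOn (fun y => m y / y) (Icc a b) :=
    hm'.div continuousOn_id (fun y hy => ne_of_gt (lt_of_lt_of_le ha hy.1))
  have hPc : ContinuousOn (fun y => 4 * Real.pi * y ^ 2 * p y) (Icc a b) :=
    ((continuous_const.mul (continuous_pow 2)).continuousOn).mul hp'
  have hsc : ContinuousOn (fun y => 3 * (m y / y) + 4 * Real.pi * y ^ 2 * p y) (Icc a b) :=
    (continuousOn_const.mul hMc).add hPc
  exact (((continuousOn_const.add (continuousOn_const.mul hMc)).mul (hsc.mul hsc)).sub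
    (continuousOn_const.mul (hMc.mul hsc))).add (continuousOn_const.mul (hMc.mul hMc))

private lemma bcc_contOn (m p : ℝ → ℝ) {a b R : ℝ} (ha : 0 < a) (hb : b < R)
    (hm_cont : ContinuousOn m (Icc 0 R)) (hp_cont : ContinuousOn p (Icc 0 R))
    (hne : ∀ y ∈ Icc a b, y * (1 - 2 * (m y / y)) ≠ 0) :
    ContinuousOn (bcc m p) (Icc a b) := by
  have hsub : Icc a b ⊆ Icc 0 R := fun x hx => ⟨le_trans ha.le hx.1, le_trans hx.2 hb.le⟩
  have hm' := hm_cont.mono hsub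
  have hp' := hp_cont.mono hsub
  have hMc : ContinuousOn (fun y => m y / y) (Icc a b) :=
    hm'.div continuousOn_id (fun y hy => ne_of_gt (lt_of_lt_of_le ha hy.1))
  have hPc : ContinuousOn (fun y => 4 * Real.pi * y ^ 2 * p y) (Icc a b) :=
    ((continuous_const.mul (continuous_pow 2)).continuousOn).mul hp'
  exact ((continuousOn_const.sub (continuousOn_const.mul hMc)).sub
      (continuousOn_const.mul hPc)).div
    (continuousOn_id.mul (continuousOn_const.sub (continuousOn_const.mul hMc))) hne

private lemma buchdahl_D_pos (g M P : ℝ) (hg0 : 0 < g)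
    (hM0 : 0 < M) (hM : 2 * M < 1) (hP : 0 < P)
    (hts : Real.sqrt g * (3 * M + P) < 6 * M)
    (hPsi : (g + (9 - 2 * g) * M) * (3 * M + P) ^ 2 - 18 * M * (3 * M + P) + 18 * M ^ 2 = 0) :
    0 < (1 - 2 * M) * ((9 - 2 * g) * (3 * M + P) ^ 2
          + 6 * (g + (9 - 2 * g) * M) * (3 * M + P) - 18 * (3 * M + P) - 18 * M)
        - (M + P) * (2 * (g + (9 - 2 * g) * M) * (3 * M + P) - 18 * M) := by
  have ht0 : 0 < Real.sqrt g := Real.sqrt_pos.mpr hg0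
  have htsq : Real.sqrt g ^ 2 = g := Real.sq_sqrt hg0.le
  set t := Real.sqrt g with htdef
  set s := 3 * M + P with hsdef
  have hs0 : 0 < s := by positivity
  have hts2 : (t * s) ^ 2 < (6 * M) ^ 2 := by nlinarith [mul_pos ht0 hs0]
  have hgs : g * s ^ 2 < 36 * M ^ 2 := by nlinarith [htsq]
  have hid : (1 - 2 * M) * (g * s ^ 2) = 18 * M * s - 18 * M ^ 2 - 9 * M * s ^ 2 := by
    linear_combination hPsi
  have hv : 0 < s ^ 2 - 2 * s + 6 * M - 8 * M ^ 2 := by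
    have h1 : 0 < 1 - 2 * M := by linarith
    have h2 : (1 - 2 * M) * (g * s ^ 2) < (1 - 2 * M) * (36 * M ^ 2) :=
      mul_lt_mul_of_pos_left hgs h1
    rw [hid] at h2
    have h3 : 9 * M * (2 * s - 2 * M - s ^ 2) < 9 * M * (4 * M - 8 * M ^ 2) := by nlinarith
    have h4 : 2 * s - 2 * M - s ^ 2 < 4 * M - 8 * M ^ 2 :=
      lt_of_mul_lt_mul_left h3 (by positivity)
    linarith
  have hsM : 0 < s - 2 * M := by simp only [hsdef]; linarith
  have hsD : s * ((1 - 2 * M) * ((9 - 2 * g) * s ^ 2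
          + 6 * (g + (9 - 2 * g) * M) * s - 18 * s - 18 * M)
        - (M + P) * (2 * (g + (9 - 2 * g) * M) * s - 18 * M))
      = 9 * (s - 2 * M) * (s ^ 2 - 2 * s + 6 * M - 8 * M ^ 2) := by
    linear_combination (6 - 8 * M - 4 * s) * hPsi
  by_contra hD
  push_neg at hD
  nlinarith [mul_pos (mul_pos (by norm_num : (0:ℝ) < 9) hsM) hv, mul_nonpos_of_nonneg_of_nonpos hs0.le hD]

private lemma buchdahl_center_neg (g ρ q : ℝ) (hg0 : 0 < g) (hρ : 0 < ρ) (hq : 0 < q)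
    (hs : Real.sqrt g * q < (2 - Real.sqrt g) * ρ) :
    g * (3 * (4 * Real.pi / 3 * ρ) + 4 * Real.pi * q) ^ 2
      - 18 * (4 * Real.pi / 3 * ρ) * (3 * (4 * Real.pi / 3 * ρ) + 4 * Real.pi * q)
      + 18 * (4 * Real.pi / 3 * ρ) ^ 2 < 0 := by
  have ht0 : 0 < Real.sqrt g := Real.sqrt_pos.mpr hg0
  have htsq : Real.sqrt g ^ 2 = g := Real.sq_sqrt hg0.le
  set t := Real.sqrt g with htdef
  have hπ : 0 < Real.pi := Real.pi_pos
  have hB0 : 0 < 4 * Real.pi * ρ + 4 * Real.pi * q := by positivity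
  have hB : t * (4 * Real.pi * ρ + 4 * Real.pi * q) < 8 * Real.pi * ρ := by nlinarith
  have h2 : g * (4 * Real.pi * ρ + 4 * Real.pi * q) ^ 2 < (8 * Real.pi * ρ) ^ 2 := by
    nlinarith [mul_pos ht0 hB0]
  nlinarith [mul_pos (mul_pos hπ hπ) (mul_pos hρ hq), mul_pos (mul_pos hπ hπ) (mul_pos hρ hρ)]

set_option maxHeartbeats 4000000 in
/-- **Generalized Buchdahl interior inequality.**
Let `g ∈ (0,4)`. For every regular perfect fluid solution (units `G = c = 1`) with a
non-decreasing equation of state `ρ = f(p)` whose pressure–density ratio satisfies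
`p(r)/f(p(r)) < 2/√g − 1` for all `r ∈ [0,R)`, the inequality
`Φ(m(r)/r, 4π r² p(r)) ≥ g` holds for all `r ∈ (0,R)`, where
`Φ(M,P) = 9M[2(2M+P) − (3M+P)²] / ((1−2M)(3M+P)²)`. -/
theorem generalized_buchdahl_interior_inequality
    (g : ℝ) (hg0 : 0 < g) (hg4 : g < 4)
    (R : ℝ) (hR : 0 < R)
    (f : ℝ → ℝ)
    (hf_nonneg : ∀ q : ℝ, 0 ≤ q → 0 ≤ f q)
    (hf_mono : MonotoneOn f (Set.Ici 0))
    (hf_cont : ContinuousOn f (Set.Ici 0))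
    (hf_pos : ∀ q : ℝ, 0 < q → 0 < f q)
    (m p : ℝ → ℝ)
    (hm_cont : ContinuousOn m (Set.Icc 0 R))
    (hp_cont : ContinuousOn p (Set.Icc 0 R))
    (hm0 : m 0 = 0)
    (hm_pos : ∀ r ∈ Set.Ioo 0 R, 0 < m r)
    (h2m : ∀ r ∈ Set.Ioo 0 R, 2 * m r < r)
    (hp_pos : ∀ r ∈ Set.Ico 0 R, 0 < p r)
    (hpR : p R = 0)
    (hTOV_m : ∀ r ∈ Set.Ioo 0 R,
      HasDerivAt m (4 * Real.pi * r ^ 2 * f (p r)) r)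
    (hTOV_p : ∀ r ∈ Set.Ioo 0 R,
      HasDerivAt p (-(f (p r) * m r / r ^ 2) * (1 + p r / f (p r)) *
        (1 + 4 * Real.pi * r ^ 3 * p r / m r) * (1 - 2 * m r / r)⁻¹) r)
    (hreg : Filter.Tendsto (fun r => m r / r ^ 3) (nhdsWithin 0 (Set.Ioi 0))
      (nhds (4 * Real.pi / 3 * f (p 0))))
    (hsigma : ∀ r ∈ Set.Ico 0 R, p r / f (p r) < 2 / Real.sqrt g - 1) :
    ∀ r ∈ Set.Ioo 0 R,
      g ≤ 9 * (m r / r) *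
            (2 * (2 * (m r / r) + 4 * Real.pi * r ^ 2 * p r)
              - (3 * (m r / r) + 4 * Real.pi * r ^ 2 * p r) ^ 2) /
          ((1 - 2 * (m r / r)) * (3 * (m r / r) + 4 * Real.pi * r ^ 2 * p r) ^ 2) := by
  have ht0 : 0 < Real.sqrt g := Real.sqrt_pos.mpr hg0
  have htsq : Real.sqrt g ^ 2 = g := Real.sq_sqrt hg0.le
  have ht2 : Real.sqrt g < 2 := by
    rw [Real.sqrt_lt' (by norm_num : (0:ℝ) < 2)]; norm_num; exact hg4
  have hπ : 0 < Real.pi := Real.pi_pos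
  -- basic pointwise facts
  have hp_pos' : ∀ x ∈ Set.Ioo 0 R, 0 < p x := fun x hx => hp_pos x ⟨hx.1.le, hx.2⟩
  have hf_pos' : ∀ x ∈ Set.Ioo 0 R, 0 < f (p x) := fun x hx => hf_pos _ (hp_pos' x hx)
  have hp_nonneg : ∀ x ∈ Set.Icc 0 R, 0 ≤ p x := by
    intro x hx
    rcases eq_or_lt_of_le hx.2 with h | h
    · rw [h, hpR]
    · exact (hp_pos x ⟨hx.1, h⟩).le
  -- p is antitone
  have hanti : AntitoneOn p (Set.Icc 0 R) := by
    have hs : StrictAntiOn p (Set.Icc 0 R) := by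
      apply strictAntiOn_of_deriv_neg (convex_Icc 0 R) hp_cont
      intro x hx
      rw [interior_Icc] at hx
      rw [(hTOV_p x hx).deriv]
      have h1 : 0 < f (p x) := hf_pos' x hx
      have h2 : 0 < m x := hm_pos x hx
      have h3 : (0:ℝ) < 1 - 2 * m x / x := by
        rw [sub_pos, div_lt_one hx.1]; exact h2m x hx
      have h4 : 0 < p x := hp_pos' x hx
      have hAp : 0 < f (p x) * m x / x ^ 2 := div_pos (mul_pos h1 h2) (pow_pos hx.1 2)
      have hBp : (0:ℝ) < 1 + p x / f (p x) := by linarith [div_pos h4 h1]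
      have hCp : (0:ℝ) < 1 + 4 * Real.pi * x ^ 3 * p x / m x := by
        have hq : 0 < 4 * Real.pi * x ^ 3 * p x :=
          mul_pos (mul_pos (by positivity) (pow_pos hx.1 3)) h4
        linarith [div_pos hq h2]
      have h5 : 0 < (1 - 2 * m x / x)⁻¹ := inv_pos.mpr h3
      have hprod := mul_pos (mul_pos (mul_pos hAp hBp) hCp) h5
      have heq : -(f (p x) * m x / x ^ 2) * (1 + p x / f (p x)) *
          (1 + 4 * Real.pi * x ^ 3 * p x / m x) * (1 - 2 * m x / x)⁻¹
          = -((f (p x) * m x / x ^ 2) * (1 + p x / f (p x)) *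
          (1 + 4 * Real.pi * x ^ 3 * p x / m x) * (1 - 2 * m x / x)⁻¹) := by ring
      rw [heq]
      exact neg_lt_zero.mpr hprod
    exact hs.antitoneOn
  -- lower bound on mass (monotone density)
  have hm_lb : ∀ x ∈ Set.Ioo 0 R, 4 * Real.pi / 3 * f (p x) * x ^ 3 ≤ m x := by
    intro x hx
    have hmono : MonotoneOn (fun y => m y - 4 * Real.pi / 3 * f (p x) * y ^ 3) (Set.Icc 0 x) := by
      apply monotoneOn_of_deriv_nonneg (convex_Icc 0 x)
      · exact (hm_cont.mono (Set.Icc_subset_Icc le_rfl hx.2.le)).sub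
          ((continuous_const.mul (continuous_pow 3)).continuousOn)
      · intro y hy
        rw [interior_Icc] at hy
        have hy' : y ∈ Set.Ioo 0 R := ⟨hy.1, hy.2.trans hx.2⟩
        exact ((hTOV_m y hy').sub ((hasDerivAt_pow 3 y).const_mul
          (4 * Real.pi / 3 * f (p x)))).differentiableAt.differentiableWithinAt
      · intro y hy
        rw [interior_Icc] at hy
        have hy' : y ∈ Set.Ioo 0 R := ⟨hy.1, hy.2.trans hx.2⟩
        rw [(show HasDerivAt (fun y => m y - 4 * Real.pi / 3 * f (p x) * y ^ 3) _ y from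
          (hTOV_m y hy').sub ((hasDerivAt_pow 3 y).const_mul
          (4 * Real.pi / 3 * f (p x)))).deriv]
        have hle : f (p x) ≤ f (p y) := by
          apply hf_mono (hp_nonneg x ⟨hx.1.le, hx.2.le⟩)
            (hp_nonneg y ⟨hy.1.le, hy'.2.le⟩)
          exact hanti ⟨hy.1.le, hy'.2.le⟩ ⟨hx.1.le, hx.2.le⟩ hy.2.le
        push_cast
        nlinarith [mul_nonneg (mul_nonneg (by positivity : (0:ℝ) ≤ 4 * Real.pi)
          (sq_nonneg y)) (sub_nonneg.mpr hle)]
    have h0m : (0:ℝ) ∈ Set.Icc 0 x := ⟨le_refl 0, hx.1.le⟩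
    have hxm : x ∈ Set.Icc 0 x := ⟨hx.1.le, le_refl x⟩
    have := hmono h0m hxm hx.1.le
    simp only [hm0] at this
    nlinarith [this]
  -- rigidity: equality forces constant density below
  have hm_rig : ∀ x ∈ Set.Ioo 0 R, m x = 4 * Real.pi / 3 * f (p x) * x ^ 3 →
      ∀ y ∈ Set.Ioo 0 x, m y = 4 * Real.pi / 3 * f (p x) * y ^ 3 ∧ f (p y) = f (p x) := by
    intro x hx heq
    have hmono : MonotoneOn (fun y => m y - 4 * Real.pi / 3 * f (p x) * y ^ 3) (Set.Icc 0 x) := by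
      apply monotoneOn_of_deriv_nonneg (convex_Icc 0 x)
      · exact (hm_cont.mono (Set.Icc_subset_Icc le_rfl hx.2.le)).sub
          ((continuous_const.mul (continuous_pow 3)).continuousOn)
      · intro y hy
        rw [interior_Icc] at hy
        have hy' : y ∈ Set.Ioo 0 R := ⟨hy.1, hy.2.trans hx.2⟩
        exact ((hTOV_m y hy').sub ((hasDerivAt_pow 3 y).const_mul
          (4 * Real.pi / 3 * f (p x)))).differentiableAt.differentiableWithinAt
      · intro y hy
        rw [interior_Icc] at hy
        have hy' : y ∈ Set.Ioo 0 R := ⟨hy.1, hy.2.trans hx.2⟩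
        rw [(show HasDerivAt (fun y => m y - 4 * Real.pi / 3 * f (p x) * y ^ 3) _ y from
          (hTOV_m y hy').sub ((hasDerivAt_pow 3 y).const_mul
          (4 * Real.pi / 3 * f (p x)))).deriv]
        have hle : f (p x) ≤ f (p y) := by
          apply hf_mono (hp_nonneg x ⟨hx.1.le, hx.2.le⟩)
            (hp_nonneg y ⟨hy.1.le, hy'.2.le⟩)
          exact hanti ⟨hy.1.le, hy'.2.le⟩ ⟨hx.1.le, hx.2.le⟩ hy.2.le
        push_cast
        nlinarith [mul_nonneg (mul_nonneg (by positivity : (0:ℝ) ≤ 4 * Real.pi)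
          (sq_nonneg y)) (sub_nonneg.mpr hle)]
    have hzero : ∀ z ∈ Set.Icc 0 x, m z - 4 * Real.pi / 3 * f (p x) * z ^ 3 = 0 := by
      intro z hz
      have h1 := hmono (⟨le_refl 0, hx.1.le⟩ : (0:ℝ) ∈ Set.Icc 0 x) hz hz.1
      have h2 := hmono hz (⟨hx.1.le, le_refl x⟩ : x ∈ Set.Icc 0 x) hz.2
      simp only [hm0] at h1
      simp only at h1 h2
      have h3 : m x - 4 * Real.pi / 3 * f (p x) * x ^ 3 = 0 := by rw [heq]; ring
      have h4 : (0:ℝ) - 4 * Real.pi / 3 * f (p x) * 0 ^ 3 = 0 := by ring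
      linarith [h1, h2, h3, h4]
    intro y hy
    have hy' : y ∈ Set.Ioo 0 R := ⟨hy.1, hy.2.trans hx.2⟩
    have hmy : m y = 4 * Real.pi / 3 * f (p x) * y ^ 3 := by
      have := hzero y ⟨hy.1.le, hy.2.le⟩
      linarith
    refine ⟨hmy, ?_⟩
    have hEq : (fun z => m z - 4 * Real.pi / 3 * f (p x) * z ^ 3) =ᶠ[nhds y]
        (fun _ => (0:ℝ)) := by
      filter_upwards [isOpen_Ioo.mem_nhds hy] with z hz
      exact hzero z (Set.Ioo_subset_Icc_self hz)
    have hw0 : HasDerivAt (fun z => m z - 4 * Real.pi / 3 * f (p x) * z ^ 3) 0 y :=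
      (hasDerivAt_const y (0:ℝ)).congr_of_eventuallyEq hEq
    have hw1 : HasDerivAt (fun z => m z - 4 * Real.pi / 3 * f (p x) * z ^ 3)
        (4 * Real.pi * y ^ 2 * f (p y) - 4 * Real.pi / 3 * f (p x) * ((3:ℕ) * y ^ (3-1))) y :=
      (hTOV_m y hy').sub ((hasDerivAt_pow 3 y).const_mul (4 * Real.pi / 3 * f (p x)))
    have hu := hw1.unique hw0
    have hy2 : (0:ℝ) < 4 * Real.pi * y ^ 2 := mul_pos (by positivity) (pow_pos hy.1 2)
    apply mul_left_cancel₀ (ne_of_gt hy2)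
    push_cast at hu
    norm_num at hu
    linarith [hu]
  -- derivative of bH
  have hder : ∀ x ∈ Set.Ioo 0 R, HasDerivAt (bH g m p) (bdH g f m p x) x := by
    intro x hx
    exact buchdahl_hasDerivAt g f m p x hx.1 (hm_pos x hx) (h2m x hx) (hp_pos' x hx)
      (hf_pos' x hx) (hTOV_m x hx) (hTOV_p x hx)
  -- negativity near the centre
  have hsmall : ∃ δ, 0 < δ ∧ ∀ x, 0 < x → x < δ → bH g m p x < 0 := by
    have hfp0 : 0 < f (p 0) := hf_pos _ (hp_pos 0 ⟨le_refl 0, hR⟩)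
    have hq0 : 0 < p 0 := hp_pos 0 ⟨le_refl 0, hR⟩
    have hIccmem : Set.Icc 0 R ∈ nhdsWithin (0:ℝ) (Set.Ioi 0) :=
      Filter.mem_of_superset (Ioo_mem_nhdsGT hR) Set.Ioo_subset_Icc_self
    have hp0lim : Filter.Tendsto p (nhdsWithin 0 (Set.Ioi 0)) (nhds (p 0)) :=
      (hp_cont 0 ⟨le_refl 0, hR.le⟩).mono_left (nhdsWithin_le_of_mem hIccmem)
    have ha : Filter.Tendsto (fun x => m x / x / x ^ 2) (nhdsWithin 0 (Set.Ioi 0))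
        (nhds (4 * Real.pi / 3 * f (p 0))) := by
      apply hreg.congr'
      filter_upwards [self_mem_nhdsWithin] with x hx
      rw [div_div, show x * x ^ 2 = x ^ 3 by ring]
    have hb : Filter.Tendsto (fun x => 4 * Real.pi * p x) (nhdsWithin 0 (Set.Ioi 0))
        (nhds (4 * Real.pi * p 0)) := hp0lim.const_mul (4 * Real.pi)
    have hx2 : Filter.Tendsto (fun x : ℝ => x ^ 2) (nhdsWithin (0:ℝ) (Set.Ioi 0))
        (nhds 0) := by
      have h := ((continuous_pow 2).tendsto (0:ℝ)).mono_left
        (nhdsWithin_le_nhds (s := Set.Ioi (0:ℝ)))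
      simpa using h
    set aL := 4 * Real.pi / 3 * f (p 0) with haL
    set bL := 4 * Real.pi * p 0 with hbL
    have hFs : Filter.Tendsto (fun x => 3 * (m x / x / x ^ 2) + 4 * Real.pi * p x)
        (nhdsWithin (0:ℝ) (Set.Ioi 0)) (nhds (3 * aL + bL)) := (ha.const_mul 3).add hb
    have hlim : Filter.Tendsto (fun x =>
        (g + (9 - 2 * g) * ((m x / x / x ^ 2) * x ^ 2)) *
          ((3 * (m x / x / x ^ 2) + 4 * Real.pi * p x) *
            (3 * (m x / x / x ^ 2) + 4 * Real.pi * p x))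
        - 18 * ((m x / x / x ^ 2) * (3 * (m x / x / x ^ 2) + 4 * Real.pi * p x))
        + 18 * ((m x / x / x ^ 2) * (m x / x / x ^ 2)))
        (nhdsWithin (0:ℝ) (Set.Ioi 0))
        (nhds ((g + (9 - 2 * g) * (aL * 0)) * ((3 * aL + bL) * (3 * aL + bL))
          - 18 * (aL * (3 * aL + bL)) + 18 * (aL * aL))) := by
      exact ((((ha.mul hx2).const_mul (9 - 2*g)).const_add g).mul (hFs.mul hFs)).sub
        ((ha.mul hFs).const_mul 18) |>.add ((ha.mul ha).const_mul 18)
    have hsig0 : Real.sqrt g * p 0 < (2 - Real.sqrt g) * f (p 0) := by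
      have h := hsigma 0 ⟨le_refl 0, hR⟩
      rw [div_lt_iff₀ hfp0] at h
      have h3 : Real.sqrt g * p 0 < Real.sqrt g * ((2 / Real.sqrt g - 1) * f (p 0)) :=
        mul_lt_mul_of_pos_left h ht0
      have h4 : Real.sqrt g * ((2 / Real.sqrt g - 1) * f (p 0))
          = (2 - Real.sqrt g) * f (p 0) := by
        field_simp
      linarith
    have hLneg : (g + (9 - 2 * g) * (aL * 0)) * ((3 * aL + bL) * (3 * aL + bL))
        - 18 * (aL * (3 * aL + bL)) + 18 * (aL * aL) < 0 := by
      have h := buchdahl_center_neg g (f (p 0)) (p 0) hg0 hfp0 hq0 hsig0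
      rw [haL, hbL]
      nlinarith [h]
    have hev := hlim.eventually_lt_const hLneg
    rw [Filter.eventually_iff] at hev
    rw [mem_nhdsGT_iff_exists_Ioo_subset] at hev
    obtain ⟨u, hu, hsub⟩ := hev
    refine ⟨u, hu, ?_⟩
    intro x hx0 hxu
    have hmem := hsub ⟨hx0, hxu⟩
    simp only [Set.mem_setOf_eq] at hmem
    have hx0' : (x:ℝ) ≠ 0 := ne_of_gt hx0
    have hbHx : bH g m p x =
        ((g + (9 - 2 * g) * ((m x / x / x ^ 2) * x ^ 2)) *
          ((3 * (m x / x / x ^ 2) + 4 * Real.pi * p x) *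
            (3 * (m x / x / x ^ 2) + 4 * Real.pi * p x))
        - 18 * ((m x / x / x ^ 2) * (3 * (m x / x / x ^ 2) + 4 * Real.pi * p x))
        + 18 * ((m x / x / x ^ 2) * (m x / x / x ^ 2))) * x ^ 4 := by
      simp only [bH]
      field_simp
    rw [hbHx]
    exact mul_neg_of_neg_of_pos hmem (by positivity)
  -- main argument
  have hbase : ∀ x ∈ Set.Ioo 0 R,
      0 < m x / x ∧ 2 * (m x / x) < 1 ∧ 0 < 4 * Real.pi * x ^ 2 * p x := by
    intro x hx
    refine ⟨div_pos (hm_pos x hx) hx.1, ?_, ?_⟩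
    · have h := h2m x hx
      have h2 : 2 * (m x / x) = 2 * m x / x := (mul_div_assoc 2 (m x) x).symm
      rw [h2, div_lt_one hx.1]
      exact h
    · exact mul_pos (mul_pos (by positivity) (pow_pos hx.1 2)) (hp_pos' x hx)
  -- sigma bound in multiplied form
  have htsig : ∀ x ∈ Set.Ioo 0 R, Real.sqrt g * (4 * Real.pi * x ^ 2 * p x)
      < (2 - Real.sqrt g) * (4 * Real.pi * x ^ 2 * f (p x)) := by
    intro x hx
    have hfx : 0 < f (p x) := hf_pos' x hx
    have h := hsigma x ⟨hx.1.le, hx.2⟩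
    rw [div_lt_iff₀ hfx] at h
    have h3 : Real.sqrt g * p x < Real.sqrt g * ((2 / Real.sqrt g - 1) * f (p x)) :=
      mul_lt_mul_of_pos_left h ht0
    have h4 : Real.sqrt g * ((2 / Real.sqrt g - 1) * f (p x))
        = (2 - Real.sqrt g) * f (p x) := by field_simp
    have hb1 : Real.sqrt g * p x < (2 - Real.sqrt g) * f (p x) := by linarith
    have hx2 : (0:ℝ) < 4 * Real.pi * x ^ 2 := mul_pos (by positivity) (pow_pos hx.1 2)
    nlinarith [mul_lt_mul_of_pos_left hb1 hx2]
  -- main argument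
  intro r hr
  by_contra hcon
  push_neg at hcon
  obtain ⟨hMr, h2Mr, hPr⟩ := hbase r hr
  have hsr : 0 < 3 * (m r / r) + 4 * Real.pi * r ^ 2 * p r := by linarith
  have hden : 0 < (1 - 2 * (m r / r)) * (3 * (m r / r) + 4 * Real.pi * r ^ 2 * p r) ^ 2 :=
    mul_pos (by linarith) (pow_pos hsr 2)
  rw [div_lt_iff₀ hden] at hcon
  have hhr : 0 < bH g m p r := by
    simp only [bH]
    nlinarith [hcon]
  obtain ⟨δ, hδ0, hδ⟩ := hsmall
  set c₀ := min δ r / 2 with hc₀def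
  have hc₀0 : 0 < c₀ := by
    rw [hc₀def]; have := lt_min hδ0 hr.1; positivity
  have hc₀r : c₀ < r := by
    rw [hc₀def]
    have h1 : min δ r ≤ r := min_le_right δ r
    linarith [hr.1]
  have hc₀δ : c₀ < δ := by
    rw [hc₀def]
    have h1 : min δ r ≤ δ := min_le_left δ r
    linarith [hδ0]
  have hc₀neg : bH g m p c₀ < 0 := hδ c₀ hc₀0 hc₀δ
  have hc₀R : c₀ < R := hc₀r.trans hr.2
  -- the first crossing point
  have hhcont : ContinuousOn (bH g m p) (Set.Icc c₀ r) :=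
    bH_contOn g m p hc₀0 hr.2 hm_cont hp_cont
  set T := Set.Icc c₀ r ∩ (bH g m p) ⁻¹' (Set.Ici 0) with hTdef
  have hTclosed : IsClosed T := hhcont.preimage_isClosed_of_isClosed isClosed_Icc isClosed_Ici
  have hTne : T.Nonempty := ⟨r, ⟨hc₀r.le, le_refl r⟩, hhr.le⟩
  have hTbdd : BddBelow T := ⟨c₀, fun x hx => hx.1.1⟩
  set r₁ := sInf T with hr₁def
  have hr₁T : r₁ ∈ T := hTclosed.csInf_mem hTne hTbdd
  obtain ⟨⟨hr₁c₀, hr₁r⟩, hr₁h⟩ := hr₁T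
  rw [Set.mem_preimage, Set.mem_Ici] at hr₁h
  have hr₁0 : 0 < r₁ := lt_of_lt_of_le hc₀0 hr₁c₀
  have hr₁R : r₁ < R := lt_of_le_of_lt hr₁r hr.2
  have hr₁mem : r₁ ∈ Set.Ioo 0 R := ⟨hr₁0, hr₁R⟩
  have hbefore : ∀ x, c₀ ≤ x → x < r₁ → bH g m p x < 0 := by
    intro x h1 h2
    by_contra hcx
    push_neg at hcx
    have hxT : x ∈ T := ⟨⟨h1, le_trans h2.le hr₁r⟩, hcx⟩
    have := csInf_le hTbdd hxT
    rw [← hr₁def] at this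
    linarith
  have hc₀r₁ : c₀ < r₁ := by
    rcases lt_or_eq_of_le hr₁c₀ with h | h
    · exact h
    · exfalso; rw [← h] at hr₁h; linarith
  have hr₁h0 : bH g m p r₁ = 0 := by
    refine le_antisymm ?_ hr₁h
    have hmemIco : Set.Ico c₀ r₁ ∈ nhdsWithin r₁ (Set.Iio r₁) :=
      Ico_mem_nhdsLT hc₀r₁
    have hcw : Filter.Tendsto (bH g m p) (nhdsWithin r₁ (Set.Iio r₁)) (nhds (bH g m p r₁)) := by
      apply (hhcont.continuousWithinAt ⟨hr₁c₀, hr₁r⟩).mono_left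
      apply nhdsWithin_le_of_mem
      exact Filter.mem_of_superset hmemIco (fun x hx => ⟨hx.1, hx.2.le.trans hr₁r⟩)
    refine le_of_tendsto hcw ?_
    filter_upwards [hmemIco] with x hx
    exact (hbefore x hx.1 hx.2).le
  have hd₁ := hder r₁ hr₁mem
  have hd₁nonneg : 0 ≤ bdH g f m p r₁ := by
    have hslope := (hasDerivAt_iff_tendsto_slope.mp hd₁).mono_left
      (nhdsWithin_mono r₁ (fun x (hx : x ∈ Set.Iio r₁) => ne_of_lt hx))
    refine ge_of_tendsto hslope ?_
    filter_upwards [Ico_mem_nhdsLT hc₀r₁] with x hx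
    rw [slope_def_field]
    rw [div_nonneg_iff]
    right
    constructor
    · rw [hr₁h0]; linarith [hbefore x hx.1 hx.2]
    · linarith [hx.2]
  obtain ⟨hMr₁, h2Mr₁, hPr₁⟩ := hbase r₁ hr₁mem
  have hfr₁ : 0 < f (p r₁) := hf_pos' r₁ hr₁mem
  have hQr₁ : 0 < 4 * Real.pi * r₁ ^ 2 * f (p r₁) :=
    mul_pos (mul_pos (by positivity) (pow_pos hr₁0 2)) hfr₁
  have hQle : 4 * Real.pi * r₁ ^ 2 * f (p r₁) ≤ 3 * (m r₁ / r₁) := by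
    have h := hm_lb r₁ hr₁mem
    have h2 : 4 * Real.pi * r₁ ^ 2 * f (p r₁) * r₁ ≤ 3 * m r₁ := by nlinarith
    calc 4 * Real.pi * r₁ ^ 2 * f (p r₁)
        = (4 * Real.pi * r₁ ^ 2 * f (p r₁) * r₁) / r₁ := by field_simp
      _ ≤ (3 * m r₁) / r₁ := by gcongr
      _ = 3 * (m r₁ / r₁) := by ring
  have hts₁ : Real.sqrt g * (3 * (m r₁ / r₁) + 4 * Real.pi * r₁ ^ 2 * p r₁)
      < 6 * (m r₁ / r₁) := by
    have h1 := htsig r₁ hr₁mem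
    have h2 : (2 - Real.sqrt g) * (4 * Real.pi * r₁ ^ 2 * f (p r₁))
        ≤ (2 - Real.sqrt g) * (3 * (m r₁ / r₁)) :=
      mul_le_mul_of_nonneg_left hQle (by linarith)
    nlinarith
  have hden₁ : 0 < r₁ * (1 - 2 * (m r₁ / r₁)) := mul_pos hr₁0 (by linarith)
  rcases lt_or_eq_of_le hQle with hQlt | hQeq
  · -- strict case: D > 0 gives negative derivative, contradiction
    have hPsi : (g + (9 - 2 * g) * (m r₁ / r₁)) *
        (3 * (m r₁ / r₁) + 4 * Real.pi * r₁ ^ 2 * p r₁) ^ 2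
        - 18 * (m r₁ / r₁) * (3 * (m r₁ / r₁) + 4 * Real.pi * r₁ ^ 2 * p r₁)
        + 18 * (m r₁ / r₁) ^ 2 = 0 := by
      have h := hr₁h0
      simp only [bH] at h
      linear_combination h
    have hD := buchdahl_D_pos g (m r₁ / r₁) (4 * Real.pi * r₁ ^ 2 * p r₁)
      hg0 hMr₁ h2Mr₁ hPr₁ hts₁ hPsi
    have hD' : 0 < bDD g m p r₁ := by
      simp only [bDD]
      nlinarith [hD]
    have hneg : bdH g f m p r₁ < 0 := by
      simp only [bdH]
      apply div_neg_of_neg_of_pos _ hden₁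
      rw [hr₁h0]
      have := mul_neg_of_neg_of_pos (sub_neg.mpr hQlt) hD'
      nlinarith [this]
    linarith
  · -- equality case: constant density, Gronwall backwards
    have hmr₁ : m r₁ = 4 * Real.pi / 3 * f (p r₁) * r₁ ^ 3 := by
      have h := hQeq
      field_simp at h
      nlinarith [h]
    have hrig := hm_rig r₁ hr₁mem hmr₁
    have h3My : ∀ y, y ∈ Set.Ioc c₀ r₁ →
        4 * Real.pi * y ^ 2 * f (p y) = 3 * (m y / y) := by
      intro y hy
      rcases lt_or_eq_of_le hy.2 with h | h
      · obtain ⟨hm_y, hf_y⟩ := hrig y ⟨lt_trans hc₀0 hy.1, h⟩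
        rw [hf_y, hm_y]
        have hy0 : (y:ℝ) ≠ 0 := ne_of_gt (lt_trans hc₀0 hy.1)
        field_simp
      · rw [h]; exact hQeq
    have hfac : ∀ y, y ∈ Set.Ioc c₀ r₁ → bdH g f m p y = bcc m p y * bH g m p y := by
      intro y hy
      have h := h3My y hy
      simp only [bdH, bcc]
      rw [h]
      ring
    -- Gronwall setup
    have hhcont₂ : ContinuousOn (bH g m p) (Set.Icc c₀ r₁) :=
      bH_contOn g m p hc₀0 hr₁R hm_cont hp_cont
    have hccont : ContinuousOn (bcc m p) (Set.Icc c₀ r₁) := by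
      apply bcc_contOn m p hc₀0 hr₁R hm_cont hp_cont
      intro y hy
      have hy0 : 0 < y := lt_of_lt_of_le hc₀0 hy.1
      have hyR : y < R := lt_of_le_of_lt hy.2 hr₁R
      obtain ⟨hM1, hM2, _⟩ := hbase y ⟨hy0, hyR⟩
      exact ne_of_gt (mul_pos hy0 (by linarith))
    obtain ⟨K, hK⟩ := isCompact_Icc.exists_bound_of_continuousOn hccont
    have hmapsTo : ∀ x ∈ Set.Icc c₀ r₁, r₁ + c₀ - x ∈ Set.Icc c₀ r₁ := by
      intro x hx
      exact ⟨by linarith [hx.2], by linarith [hx.1]⟩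
    have hcontref : ContinuousOn (fun x => bH g m p (r₁ + c₀ - x)) (Set.Icc c₀ r₁) := by
      apply hhcont₂.comp (Continuous.continuousOn (by continuity)) hmapsTo
    have hderref : ∀ x ∈ Set.Ico c₀ r₁, HasDerivWithinAt (fun x => bH g m p (r₁ + c₀ - x))
        ((fun x => -bdH g f m p (r₁ + c₀ - x)) x) (Set.Ici x) x := by
      intro x hx
      have hy : r₁ + c₀ - x ∈ Set.Ioo 0 R :=
        ⟨by linarith [hx.2, hc₀0], by linarith [hx.1, hr₁R]⟩
      have hinner : HasDerivAt (fun x : ℝ => r₁ + c₀ - x) (-1) x :=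
        (hasDerivAt_id x).const_sub (r₁ + c₀)
      have hcomp := (hder _ hy).comp x hinner
      have : bdH g f m p (r₁ + c₀ - x) * (-1) = -bdH g f m p (r₁ + c₀ - x) := by ring
      rw [this] at hcomp
      exact hcomp.hasDerivWithinAt
    have hstart : ‖bH g m p (r₁ + c₀ - c₀)‖ ≤ 0 := by
      rw [show r₁ + c₀ - c₀ = r₁ by ring, hr₁h0]
      simp
    have hbound : ∀ x ∈ Set.Ico c₀ r₁,
        ‖(fun x => -bdH g f m p (r₁ + c₀ - x)) x‖ ≤ K * ‖bH g m p (r₁ + c₀ - x)‖ + 0 := by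
      intro x hx
      have hy : r₁ + c₀ - x ∈ Set.Ioc c₀ r₁ := ⟨by linarith [hx.2], by linarith [hx.1]⟩
      simp only [norm_neg]
      rw [hfac _ hy, norm_mul]
      have hKy := hK (r₁ + c₀ - x) ⟨hy.1.le, hy.2⟩
      have h0 : (0:ℝ) ≤ ‖bH g m p (r₁ + c₀ - x)‖ := norm_nonneg _
      nlinarith [mul_le_mul_of_nonneg_right hKy h0]
    have happ := norm_le_gronwallBound_of_norm_deriv_right_le hcontref hderref hstart hbound
      r₁ ⟨hc₀r₁.le, le_refl r₁⟩
    rw [gronwallBound_ε0] at happ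
    simp only [zero_mul] at happ
    rw [show r₁ + c₀ - r₁ = c₀ by ring] at happ
    have : bH g m p c₀ = 0 := norm_le_zero_iff.mp happ
    linarith
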